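/- For every critical value c, every a > c and every p ∈ (0, 1), there exists a unique θ ∈ ℝ such that F(a; θ, c) = p. -/

import Mathlib

open Filter Set

/-- The standard normal CDF `Φ(t) = (2π)^{−1/2} ∫_{−∞}^t exp(−s²/2) ds`. -/
noncomputable def Phi (t : ℝ) : ℝ :=
  (Real.sqrt (2 * Real.pi))⁻¹ * ∫ s in Set.Iic t, Real.exp (-(s ^ 2) / 2)

/-- The truncated-normal distribution function
    `F(a; θ, c) := (Φ(a − θ) − Φ(c − θ)) / (1 − Φ(c − θ))`. -/
noncomputable def F (a θ c : ℝ) : ℝ :=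
  (Phi (a - θ) - Phi (c - θ)) / (1 - Phi (c - θ))

open MeasureTheory

noncomputable def gg (s : ℝ) : ℝ := Real.exp (-(s ^ 2) / 2)

lemma gg_pos (s : ℝ) : 0 < gg s := Real.exp_pos _

lemma gg_cont : Continuous gg := by
  unfold gg; continuity

lemma gg_eq' : gg = fun s => Real.exp (-(2⁻¹ : ℝ) * s ^ 2) := by
  funext s; unfold gg; ring_nf

lemma gg_int : MeasureTheory.Integrable gg := by
  rw [gg_eq']; exact integrable_exp_neg_mul_sq (by norm_num)

lemma integral_gg : ∫ s, gg s = Real.sqrt (2 * Real.pi) := by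
  rw [gg_eq', integral_gaussian]
  rw [show Real.pi / 2⁻¹ = 2 * Real.pi by ring]

lemma mul_gg_int : MeasureTheory.Integrable (fun s => s * gg s) := by
  have := integrable_mul_exp_neg_mul_sq (b := 2⁻¹) (by norm_num)
  rw [gg_eq']; exact this

noncomputable def T (t : ℝ) : ℝ := ∫ s in Set.Ioi t, gg s

lemma T_pos (t : ℝ) : 0 < T t := by
  rw [T, setIntegral_pos_iff_support_of_nonneg_ae]
  · have : Function.support gg = Set.univ := by
      ext s; simp [Function.mem_support, (gg_pos s).ne']
    rw [this, Set.univ_inter]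
    simp [MeasureTheory.Measure.measure_Ioi_pos]
  · filter_upwards with s using (gg_pos s).le
  · exact gg_int.integrableOn

lemma Iic_int (t : ℝ) : MeasureTheory.IntegrableOn gg (Set.Iic t) := gg_int.integrableOn

lemma c0_pos : 0 < Real.sqrt (2 * Real.pi) :=
  Real.sqrt_pos.mpr (by positivity)

lemma Phi_eq (t : ℝ) : Phi t = (Real.sqrt (2 * Real.pi))⁻¹ * ∫ s in Set.Iic t, gg s := rfl

lemma one_sub_Phi (t : ℝ) : 1 - Phi t = (Real.sqrt (2 * Real.pi))⁻¹ * T t := by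
  have h := intervalIntegral.integral_Iic_add_Ioi (Iic_int t) (gg_int.integrableOn (s := Set.Ioi t))
  rw [integral_gg] at h
  rw [Phi_eq, T, show (∫ s in Set.Ioi t, gg s) = Real.sqrt (2*Real.pi) - ∫ s in Set.Iic t, gg s
    from by linarith [h], mul_sub, inv_mul_cancel₀ c0_pos.ne']

lemma Phi_lt_one (t : ℝ) : Phi t < 1 := by
  have := one_sub_Phi t
  nlinarith [T_pos t, inv_pos.mpr c0_pos]

lemma Phi_sub (s t : ℝ) : Phi t - Phi s =
    (Real.sqrt (2 * Real.pi))⁻¹ * ∫ u in s..t, gg u := by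
  rw [Phi_eq, Phi_eq, ← mul_sub, intervalIntegral.integral_Iic_sub_Iic (Iic_int s) (Iic_int t)]

lemma Phi_cont : Continuous Phi := by
  have h : ∀ t, Phi t = (Real.sqrt (2 * Real.pi))⁻¹ *
      ((∫ s in Set.Iic (0:ℝ), gg s) + ∫ s in (0:ℝ)..t, gg s) := by
    intro t
    rw [Phi_eq, ← intervalIntegral.integral_Iic_sub_Iic (Iic_int 0) (Iic_int t)]
    ring
  simp only [funext h]
  exact continuous_const.mul (continuous_const.add
    (intervalIntegral.continuous_primitive (fun a b => gg_int.intervalIntegrable) 0))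

lemma integral_Ioi_comp_add (f : ℝ → ℝ) (hf : Continuous f) (b δ : ℝ) :
    ∫ x in Set.Ioi b, f (x + δ) = ∫ x in Set.Ioi (b + δ), f x := by
  have hmp : MeasureTheory.Measure.map (fun x : ℝ => x + δ) volume = volume :=
    MeasureTheory.map_add_right_eq_self volume δ
  have := MeasureTheory.setIntegral_map (μ := (volume : MeasureTheory.Measure ℝ))
    (g := fun x : ℝ => x + δ) (f := f) (s := Set.Ioi (b + δ))
    measurableSet_Ioi (by rw [hmp]; exact hf.aestronglyMeasurable)
    (measurable_add_const δ).aemeasurable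
  rw [hmp] at this
  rw [show (fun x : ℝ => x + δ) ⁻¹' Set.Ioi (b + δ) = Set.Ioi b from by ext x; simp] at this
  exact this.symm

lemma gg_shift (u δ : ℝ) : gg (u + δ) = gg u * Real.exp (-δ * u - δ ^ 2 / 2) := by
  unfold gg
  rw [← Real.exp_add]
  ring_nf

lemma T_split (y x : ℝ) (h : y ≤ x) : T y = (∫ s in y..x, gg s) + T x := by
  rw [T, T, intervalIntegral.integral_of_le h,
    ← MeasureTheory.setIntegral_union (Set.Ioc_disjoint_Ioi le_rfl) measurableSet_Ioi
      (gg_int.integrableOn) (gg_int.integrableOn),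
    Set.Ioc_union_Ioi_eq_Ioi h]

lemma key_ineq (y y' d : ℝ) (hyy : y < y') (hd : 0 < d) :
    (∫ s in y..(y+d), gg s) * T (y'+d) < (∫ s in y'..(y'+d), gg s) * T (y+d) := by
  set δ := y' - y with hδdef
  have hδ : 0 < δ := by simp [hδdef]; linarith
  set K := Real.exp (-δ * (y+d) - δ ^ 2 / 2) with hK
  set A := ∫ s in y..(y+d), gg s with hA
  set A' := ∫ s in y'..(y'+d), gg s with hA'
  set B := T (y+d) with hB
  set B' := T (y'+d) with hB'
  have hA_pos : 0 < A := intervalIntegral.intervalIntegral_pos_of_pos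
    (gg_cont.intervalIntegrable _ _) gg_pos (by linarith)
  have hB_pos : 0 < B := T_pos _
  -- Step 1: A' as shifted integral
  have step1 : A' = ∫ u in y..(y+d), gg (u + δ) := by
    rw [intervalIntegral.integral_comp_add_right (fun s => gg s) δ]
    rw [hA']
    congr 1 <;> ring
  -- Step 2: K * A < A'
  have step2 : K * A < A' := by
    have hpos : 0 < ∫ u in y..(y+d),
        (gg u * Real.exp (-δ * u - δ ^ 2 / 2) - gg u * K) := by
      apply intervalIntegral.intervalIntegral_pos_of_pos_on
      · exact ((gg_cont.mul (by fun_prop)).sub (gg_cont.mul continuous_const)).intervalIntegrable _ _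
      · intro u hu
        have : K < Real.exp (-δ * u - δ ^ 2 / 2) := by
          apply Real.exp_lt_exp.mpr
          nlinarith [hu.2]
        nlinarith [gg_pos u]
      · linarith
    have heq : (∫ u in y..(y+d), (gg u * Real.exp (-δ * u - δ ^ 2 / 2) - gg u * K))
        = A' - K * A := by
      rw [intervalIntegral.integral_sub (f := fun u => gg u * Real.exp (-δ * u - δ ^ 2 / 2)) (g := fun u => gg u * K) ((gg_cont.mul (by fun_prop)).intervalIntegrable _ _)
        ((gg_cont.mul continuous_const).intervalIntegrable _ _)]
      congr 1
      · rw [step1]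
        apply intervalIntegral.integral_congr
        intro u _
        exact (gg_shift u δ).symm
      · rw [show (fun u => gg u * K) = fun u => K * gg u from by funext u; ring,
          intervalIntegral.integral_const_mul]
    linarith [heq ▸ hpos]
  -- Step 3: B' ≤ K * B
  have step3 : B' ≤ K * B := by
    have h1 : B' = ∫ t in Set.Ioi (y+d), gg (t + δ) := by
      have hyd : y' + d = (y + d) + δ := by ring
      rw [hB', hyd, T, ← integral_Ioi_comp_add gg gg_cont (y+d) δ]
    have h2 : (∫ t in Set.Ioi (y+d), gg (t + δ))
        ≤ ∫ t in Set.Ioi (y+d), K * gg t := by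
      apply MeasureTheory.setIntegral_mono_on
      · exact (gg_int.comp_add_right δ).integrableOn
      · exact (gg_int.const_mul K).integrableOn
      · exact measurableSet_Ioi
      · intro t ht
        rw [gg_shift]
        have : Real.exp (-δ * t - δ ^ 2 / 2) ≤ K := by
          apply Real.exp_le_exp.mpr
          have := Set.mem_Ioi.mp ht
          nlinarith
        nlinarith [gg_pos t]
    rw [MeasureTheory.integral_const_mul] at h2
    rw [h1]
    exact h2
  calc A * B' ≤ A * (K * B) := by nlinarith
    _ = (K * A) * B := by ring
    _ < A' * B := by nlinarith

lemma F_eq (a θ c : ℝ) : F a θ c = (∫ s in (c-θ)..(a-θ), gg s) / T (c-θ) := by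
  rw [F, one_sub_Phi, Phi_sub,
    mul_div_mul_left _ _ (inv_ne_zero c0_pos.ne')]

lemma F_strictAnti (c a : ℝ) (hac : c < a) : StrictAnti (fun θ => F a θ c) := by
  intro θ1 θ2 h
  simp only
  set d := a - c with hd
  have hd0 : 0 < d := by simp [hd]; linarith
  have e1 : a - θ1 = (c - θ1) + d := by ring
  have e2 : a - θ2 = (c - θ2) + d := by ring
  have hy : c - θ2 < c - θ1 := by linarith
  have key := key_ineq (c - θ2) (c - θ1) d hy hd0
  rw [F_eq, F_eq, e1, e2, div_lt_div_iff₀ (T_pos _) (T_pos _)]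
  have s1 := T_split (c - θ1) ((c - θ1) + d) (by linarith)
  have s2 := T_split (c - θ2) ((c - θ2) + d) (by linarith)
  rw [s1, s2]
  nlinarith [intervalIntegral.intervalIntegral_pos_of_pos
    (gg_cont.intervalIntegrable (c - θ1) ((c-θ1)+d)) gg_pos (by linarith : c - θ1 < (c-θ1)+d),
    intervalIntegral.intervalIntegral_pos_of_pos
    (gg_cont.intervalIntegrable (c - θ2) ((c-θ2)+d)) gg_pos (by linarith : c - θ2 < (c-θ2)+d)]

lemma tendsto_Phi_atBot : Tendsto Phi atBot (nhds 0) := by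
  have hIic : Tendsto (fun t => ∫ s in Set.Iic t, gg s) atBot (nhds 0) := by
    apply tendsto_of_tendsto_of_tendsto_of_le_of_le' tendsto_const_nhds Real.tendsto_exp_atBot
    · filter_upwards with t
      exact MeasureTheory.setIntegral_nonneg measurableSet_Iic fun s _ => (gg_pos s).le
    · filter_upwards [eventually_le_atBot (-2 : ℝ)] with t ht
      calc (∫ s in Set.Iic t, gg s) ≤ ∫ s in Set.Iic t, Real.exp s := by
            apply MeasureTheory.setIntegral_mono_on gg_int.integrableOn
              (integrableOn_exp_Iic t) measurableSet_Iic
            intro s hs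
            have hs' : s ≤ -2 := le_trans hs ht
            unfold gg
            apply Real.exp_le_exp.mpr
            nlinarith
        _ = Real.exp t := integral_exp_Iic t
  have h := hIic.const_mul (Real.sqrt (2 * Real.pi))⁻¹
  rw [mul_zero] at h
  exact h.congr fun t => (Phi_eq t).symm

lemma tendsto_sub_atBot (a : ℝ) : Tendsto (fun θ : ℝ => a - θ) atTop atBot := by
  simp only [sub_eq_add_neg]
  exact tendsto_atBot_add_const_left _ a tendsto_neg_atTop_atBot

lemma F_tendsto_atTop (c a : ℝ) : Tendsto (fun θ => F a θ c) atTop (nhds 0) := by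
  have h1 : Tendsto (fun θ : ℝ => Phi (a - θ)) atTop (nhds 0) :=
    tendsto_Phi_atBot.comp (tendsto_sub_atBot a)
  have h2 : Tendsto (fun θ : ℝ => Phi (c - θ)) atTop (nhds 0) :=
    tendsto_Phi_atBot.comp (tendsto_sub_atBot c)
  have := Tendsto.div (h1.sub h2) (tendsto_const_nhds.sub h2)
    (by norm_num : (1:ℝ) - 0 ≠ 0)
  simpa [F, Pi.div_def] using this

lemma integral_mul_gg_Ioi (x : ℝ) : ∫ s in Set.Ioi x, s * gg s = gg x := by
  have hderiv : ∀ s ∈ Set.Ici x, HasDerivAt (fun u => -gg u) (s * gg s) s := by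
    intro s _
    have h1 : HasDerivAt (fun u : ℝ => -(u ^ 2) / 2) (-s) s := by
      have := ((hasDerivAt_pow 2 s).neg).div_const 2
      refine this.congr_deriv ?_
      push_cast
      ring
    have h2 := (Real.hasDerivAt_exp (-(s ^ 2) / 2)).comp s h1
    have h3 := h2.neg
    refine h3.congr_deriv ?_
    unfold gg
    ring
  have htend : Tendsto (fun u => -gg u) atTop (nhds 0) := by
    have hsq : Tendsto (fun u : ℝ => -(u ^ 2) / 2) atTop atBot := by
      apply Tendsto.atBot_div_const (by norm_num : (0:ℝ) < 2)
      exact (tendsto_neg_atTop_atBot).comp (tendsto_pow_atTop (by norm_num))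
    have := (Real.tendsto_exp_atBot.comp hsq).neg
    simpa [gg] using this
  have := MeasureTheory.integral_Ioi_of_hasDerivAt_of_tendsto'
    hderiv (mul_gg_int.integrableOn) htend
  simpa using this

lemma T_le (x : ℝ) (hx : 0 < x) : T x ≤ gg x / x := by
  have h1 : T x ≤ ∫ s in Set.Ioi x, x⁻¹ * (s * gg s) := by
    apply MeasureTheory.setIntegral_mono_on gg_int.integrableOn
      ((mul_gg_int.const_mul x⁻¹).integrableOn) measurableSet_Ioi
    intro s hs
    have hxs : x < s := hs
    have h2 : 1 ≤ s / x := (one_le_div hx).mpr hxs.le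
    calc gg s = 1 * gg s := (one_mul _).symm
      _ ≤ (s / x) * gg s := mul_le_mul_of_nonneg_right h2 (gg_pos s).le
      _ = x⁻¹ * (s * gg s) := by ring
  rw [MeasureTheory.integral_const_mul, integral_mul_gg_Ioi] at h1
  rw [div_eq_inv_mul]
  exact h1

lemma T_ge (y d : ℝ) (hy : 0 ≤ y) (hd : 0 < d) : d * gg (y + d) ≤ T y := by
  have hsplit := T_split y (y + d) (by linarith)
  have hA : d * gg (y + d) ≤ ∫ s in y..(y + d), gg s := by
    have hmono := intervalIntegral.integral_mono_on (μ := volume) (by linarith : y ≤ y + d)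
      ((continuous_const : Continuous fun _ : ℝ => gg (y + d)).intervalIntegrable _ _)
      (gg_cont.intervalIntegrable _ _)
      (fun s hs => by
        unfold gg
        apply Real.exp_le_exp.mpr
        have h1 := hs.1
        have h2 := hs.2
        nlinarith)
    rw [intervalIntegral.integral_const, smul_eq_mul] at hmono
    calc d * gg (y + d) = (y + d - y) * gg (y + d) := by ring
      _ ≤ _ := hmono
  linarith [T_pos (y + d)]

lemma ratio_tendsto (d : ℝ) (hd : 0 < d) :
    Tendsto (fun y => T (y + d) / T y) atTop (nhds 0) := by
  have hupper : Tendsto (fun y : ℝ => 1 / (d * (y + d))) atTop (nhds 0) := by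
    simp only [one_div]
    apply Tendsto.comp tendsto_inv_atTop_zero
    apply Tendsto.const_mul_atTop hd
    exact tendsto_atTop_add_const_right _ d tendsto_id
  apply tendsto_of_tendsto_of_tendsto_of_le_of_le' tendsto_const_nhds hupper
  · filter_upwards with y
    exact div_nonneg (T_pos _).le (T_pos _).le
  · filter_upwards [eventually_ge_atTop (1 : ℝ)] with y hy
    have hyd : 0 < y + d := by linarith
    have h1 : T (y + d) ≤ gg (y + d) / (y + d) := T_le _ hyd
    have h2 : d * gg (y + d) ≤ T y := T_ge y d (by linarith) hd
    have h3 : 0 < d * gg (y + d) := mul_pos hd (gg_pos _)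
    calc T (y + d) / T y ≤ (gg (y + d) / (y + d)) / (d * gg (y + d)) :=
          div_le_div₀ (div_nonneg (gg_pos _).le hyd.le) h1 h3 h2
      _ = 1 / (d * (y + d)) := by
          field_simp [(gg_pos (y + d)).ne']

lemma F_tendsto_atBot (c a : ℝ) (hac : c < a) :
    Tendsto (fun θ => F a θ c) atBot (nhds 1) := by
  set d := a - c with hd
  have hd0 : 0 < d := by simp [hd]; linarith
  have hF : ∀ θ, F a θ c = 1 - T ((c - θ) + d) / T (c - θ) := by
    intro θ
    have e : a - θ = (c - θ) + d := by ring
    rw [F_eq, e]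
    have hsplit := T_split (c - θ) ((c - θ) + d) (by linarith)
    have hT := (T_pos (c - θ)).ne'
    field_simp
    linarith [hsplit]
  have hcomp : Tendsto (fun θ : ℝ => c - θ) atBot atTop := by
    simp only [sub_eq_add_neg]
    exact tendsto_atTop_add_const_left _ c tendsto_neg_atBot_atTop
  have hratio : Tendsto (fun θ : ℝ => T ((c - θ) + d) / T (c - θ)) atBot (nhds 0) :=
    (ratio_tendsto d hd0).comp hcomp
  have h1 : Tendsto (fun θ : ℝ => 1 - T ((c - θ) + d) / T (c - θ)) atBot (nhds (1 - 0)) :=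
    (tendsto_const_nhds (x := (1:ℝ))).sub hratio
  rw [sub_zero] at h1
  exact h1.congr fun θ => (hF θ).symm

lemma F_cont (c a : ℝ) : Continuous (fun θ => F a θ c) := by
  unfold F
  apply Continuous.div
  · exact (Phi_cont.comp (by continuity)).sub (Phi_cont.comp (by continuity))
  · exact continuous_const.sub (Phi_cont.comp (by continuity))
  · intro θ
    have := Phi_lt_one (c - θ)
    intro h
    have h2 : Phi (c - θ) = 1 := by
      have := sub_eq_zero.mp h
      linarith
    linarith

/-- For every critical value `c`, every `a > c` and every `p ∈ (0,1)`, there is a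
unique `θ ∈ ℝ` with `F(a; θ, c) = p`. -/
theorem stmt_1 (c a p : ℝ) (ha : c < a) (hp : p ∈ Set.Ioo (0 : ℝ) 1) :
    ∃! θ : ℝ, F a θ c = p := by
  obtain ⟨θ1, hθ1⟩ := ((F_tendsto_atBot c a ha).eventually (eventually_gt_nhds hp.2)).exists
  obtain ⟨θ2, hθ2⟩ := ((F_tendsto_atTop c a).eventually (eventually_lt_nhds hp.1)).exists
  have h12 : θ1 ≤ θ2 := by
    by_contra h
    push_neg at h
    have := (F_strictAnti c a ha).antitone h.le
    linarith
  have hIcc : p ∈ Set.Icc (F a θ2 c) (F a θ1 c) := ⟨hθ2.le, hθ1.le⟩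
  obtain ⟨θ0, _, hθ0⟩ := intermediate_value_Icc' h12 (F_cont c a).continuousOn hIcc
  refine ⟨θ0, hθ0, fun θ' h' => ?_⟩
  exact (F_strictAnti c a ha).injective (h'.trans hθ0.symm)
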